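/- Let R be a commutative ring, q ∈ R, A a commutative R-algebra and y ∈ A, and assume the q-characteristic of R is p > 0. Let u : A⟨ω⟩_{1,y^p} → A⟨ξ⟩_{q,y} be the A-linear map with u(ω^{[k]}) = ξ^{[kp]} for all k (the twisted divided p-power map). Then: (1) if R is q-flat, u is a ring homomorphism; (2) if R is q-divisible, u induces an isomorphism of A-algebras A⟨ω⟩_{1,y^p} ≅ A⟨ξ⟩_{q,y}/(ξ), where (ξ) is the ideal generated by ξ = ξ^{[1]}. -/

import Mathlib

def qInt {R : Type*} [CommRing R] (q : R) (m : ℕ) : R := ∑ i ∈ Finset.range m, q ^ i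

def qChoose {R : Type*} [CommRing R] (q : R) : ℕ → ℕ → R
  | _, 0 => 1
  | 0, _ + 1 => 0
  | n + 1, k + 1 => qChoose q n k + q ^ (k + 1) * qChoose q n (k + 1)

def dpCoeff {A : Type*} [CommRing A] (q y : A) (m n i : ℕ) : A :=
  (-1 : A) ^ i * q ^ (i * (i - 1) / 2) * qChoose q (m + n - i) m * qChoose q m i * y ^ i

namespace Aux

variable {R S : Type*} [CommRing R] [CommRing S] (q : R)

lemma qInt_zero : qInt q 0 = 0 := by simp [qInt]

lemma qInt_one : qInt q 1 = 1 := by simp [qInt]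

lemma qInt_succ (m : ℕ) : qInt q (m + 1) = qInt q m + q ^ m := by
  simp [qInt, Finset.sum_range_succ]

lemma qInt_add (m n : ℕ) : qInt q (m + n) = qInt q m + q ^ m * qInt q n := by
  induction n with
  | zero => simp [qInt_zero]
  | succ n ih =>
    rw [← Nat.add_assoc, qInt_succ, ih, qInt_succ, pow_add]
    ring

lemma qChoose_zero_right (n : ℕ) : qChoose q n 0 = 1 := by cases n <;> rfl

lemma qChoose_zero_succ (k : ℕ) : qChoose q 0 (k + 1) = 0 := rfl

lemma qChoose_succ_succ (n k : ℕ) :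
    qChoose q (n + 1) (k + 1) = qChoose q n k + q ^ (k + 1) * qChoose q n (k + 1) := rfl

lemma qChoose_eq_zero : ∀ {n k : ℕ}, n < k → qChoose q n k = 0 := by
  intro n
  induction n with
  | zero => intro k h; cases k with
    | zero => omega
    | succ k => rfl
  | succ n ih =>
    intro k h
    cases k with
    | zero => omega
    | succ k =>
      rw [qChoose_succ_succ, ih (by omega), ih (by omega), mul_zero, add_zero]

lemma qChoose_self (n : ℕ) : qChoose q n n = 1 := by
  induction n with
  | zero => rfl
  | succ n ih =>
    rw [qChoose_succ_succ, ih, qChoose_eq_zero q (by omega), mul_zero, add_zero]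

lemma qChoose_one_right (n : ℕ) : qChoose q n 1 = qInt q n := by
  induction n with
  | zero => simp [qChoose_zero_succ, qInt_zero]
  | succ n ih =>
    rw [qChoose_succ_succ, qChoose_zero_right, ih, show n + 1 = 1 + n from Nat.add_comm n 1,
      qInt_add, qInt_one]

def qFact {R : Type*} [CommRing R] (q : R) (n : ℕ) : R := ∏ i ∈ Finset.range n, qInt q (i + 1)

lemma qFact_succ (n : ℕ) : qFact q (n + 1) = qFact q n * qInt q (n + 1) := by
  simp [qFact, Finset.prod_range_succ]

lemma qChoose_mul_qFact : ∀ {n k : ℕ}, k ≤ n →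
    qChoose q n k * (qFact q k * qFact q (n - k)) = qFact q n := by
  intro n
  induction n with
  | zero => intro k h; interval_cases k; simp [qChoose_zero_right, qFact]
  | succ n ih =>
    intro k h
    cases k with
    | zero => simp [qChoose_zero_right, qFact]
    | succ k =>
      rcases Nat.lt_or_ge k n with hk | hk
      · -- k + 1 ≤ n
        rw [qChoose_succ_succ, add_mul, Nat.succ_sub_succ]
        have h1 : qChoose q n k * (qFact q k * qFact q (n - k)) = qFact q n := ih (by omega)
        have h2 : qChoose q n (k + 1) * (qFact q (k + 1) * qFact q (n - (k + 1))) = qFact q n :=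
          ih (by omega)
        have e1 : qFact q (k + 1) = qFact q k * qInt q (k + 1) := qFact_succ q k
        have e2 : n - k = (n - (k + 1)) + 1 := by omega
        have e3 : qFact q (n - k) = qFact q (n - (k + 1)) * qInt q (n - k) := by
          rw [e2, qFact_succ, ← e2]
        have e4 : qInt q (k + 1) + q ^ (k + 1) * qInt q (n - k) = qInt q (n + 1) := by
          have h5 := qInt_add q (k + 1) (n - k)
          rw [show k + 1 + (n - k) = n + 1 by omega] at h5
          exact h5.symm
        have f : qFact q (n + 1) = qFact q n * qInt q (n + 1) := qFact_succ q n
        linear_combination (qChoose q n k * qFact q (n - k)) * e1 +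
          (q ^ (k + 1) * qChoose q n (k + 1) * qFact q (k + 1)) * e3 +
          qInt q (k + 1) * h1 + (q ^ (k + 1) * qInt q (n - k)) * h2 + qFact q n * e4 - f
      · -- k = n
        have hkn : k = n := by omega
        subst hkn
        rw [qChoose_succ_succ, qChoose_self, qChoose_eq_zero q (by omega),
          Nat.succ_sub_succ, Nat.sub_self]
        simp [qFact, Finset.prod_range_succ]

section Char

variable (p : ℕ) (hp : 0 < p) (hp0 : qInt q p = 0)
  (hmin : ∀ m : ℕ, 0 < m → m < p → qInt q m ≠ 0)

include hp0 in
lemma q_pow_p : q ^ p = 1 := by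
  have h := geom_sum_mul q p
  rw [show ∑ i ∈ Finset.range p, q ^ i = qInt q p from rfl, hp0, zero_mul] at h
  linear_combination -h

include hp0 in
lemma qInt_mod (m : ℕ) : qInt q m = qInt q (m % p) := by
  conv_lhs => rw [show m = p * (m / p) + m % p from (Nat.div_add_mod m p).symm]
  induction m / p with
  | zero => simp
  | succ i ih =>
    rw [show p * (i + 1) + m % p = p + (p * i + m % p) by ring, qInt_add, hp0, q_pow_p q p hp0,
      one_mul, zero_add, ih]

include hp hp0 hmin in
lemma qInt_eq_zero_iff (m : ℕ) : qInt q m = 0 ↔ p ∣ m := by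
  rw [qInt_mod q p hp0]
  constructor
  · intro h
    by_contra hd
    exact hmin (m % p) (Nat.pos_of_ne_zero fun h0 => hd (Nat.dvd_of_mod_eq_zero h0))
      (Nat.mod_lt m hp) h
  · intro h
    rw [Nat.mod_eq_zero_of_dvd h]
    exact qInt_zero q
variable (hflat : ∀ m : ℕ, qInt q m = 0 ∨ IsRegular (qInt q m))

include hp hp0 hmin hflat in
lemma qInt_regular {m : ℕ} (h : ¬ p ∣ m) : IsRegular (qInt q m) := by
  rcases hflat m with h0 | h0
  · exact absurd ((qInt_eq_zero_iff q p hp hp0 hmin m).mp h0) h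
  · exact h0

include hp hp0 hmin hflat in
lemma qFact_regular {k : ℕ} (h : k < p) : IsRegular (qFact q k) := by
  induction k with
  | zero => simpa [qFact] using isRegular_one
  | succ k ih =>
    rw [qFact_succ]
    exact (ih (by omega)).mul (qInt_regular q p hp hp0 hmin hflat
      (fun hd => absurd (Nat.le_of_dvd (by omega) hd) (by omega)))

include hp hp0 hmin hflat in
lemma qChoose_p_eq_zero {k : ℕ} (h0 : 0 < k) (h : k < p) : qChoose q p k = 0 := by
  have key := qChoose_mul_qFact q (show k ≤ p by omega)
  have hfp : qFact q p = 0 := by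
    rw [show p = (p - 1) + 1 by omega, qFact_succ, show p - 1 + 1 = p by omega, hp0, mul_zero]
  rw [hfp] at key
  have hreg : IsRegular (qFact q k * qFact q (p - k)) :=
    (qFact_regular q p hp hp0 hmin hflat (by omega)).mul
      (qFact_regular q p hp hp0 hmin hflat (by omega))
  exact hreg.right (by simpa using key)


include hp hp0 hmin hflat in
lemma lucas : ∀ n k n1 n0 k1 k0 : ℕ, n = n1 * p + n0 → k = k1 * p + k0 → n0 < p → k0 < p →
    qChoose q n k = (n1.choose k1 : R) * qChoose q n0 k0 := by
  have hq : ∀ a b : ℕ, q ^ (a * p + b) = q ^ b := by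
    intro a b
    rw [pow_add, mul_comm a p, pow_mul, q_pow_p q p hp0, one_pow, one_mul]
  intro n
  induction n with
  | zero =>
    intro k n1 n0 k1 k0 hn hk h0 h1
    obtain ⟨hn1, hn0⟩ : n1 * p = 0 ∧ n0 = 0 := Nat.add_eq_zero.mp hn.symm
    have hn1' : n1 = 0 := by rcases Nat.mul_eq_zero.mp hn1 with h | h <;> omega
    subst hn0; subst hn1'
    cases k with
    | zero =>
      obtain ⟨hk1, hk0⟩ : k1 * p = 0 ∧ k0 = 0 := Nat.add_eq_zero.mp hk.symm
      have hk1' : k1 = 0 := by rcases Nat.mul_eq_zero.mp hk1 with h | h <;> omega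
      subst hk0; subst hk1'
      simp [qChoose_zero_right]
    | succ m =>
      rw [qChoose_zero_succ]
      cases k0 with
      | zero =>
        have hk1 : 0 < k1 := by
          rcases Nat.eq_zero_or_pos k1 with h | h
          · subst h; simp at hk
          · exact h
        rw [Nat.choose_eq_zero_of_lt hk1, Nat.cast_zero, zero_mul]
      | succ s => rw [qChoose_zero_succ, mul_zero]
  | succ n ih =>
    intro k n1 n0 k1 k0 hn hk h0 h1
    cases k with
    | zero =>
      obtain ⟨hk1, hk0⟩ : k1 * p = 0 ∧ k0 = 0 := Nat.add_eq_zero.mp hk.symm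
      have hk1' : k1 = 0 := by rcases Nat.mul_eq_zero.mp hk1 with h | h <;> omega
      subst hk0; subst hk1'
      simp [qChoose_zero_right]
    | succ k' =>
      rw [qChoose_succ_succ]
      rcases Nat.eq_zero_or_pos n0 with hn0 | hn0
      · -- n0 = 0
        subst hn0
        have hn1 : 0 < n1 := by
          rcases Nat.eq_zero_or_pos n1 with h | h
          · subst h; simp at hn
          · exact h
        have e : (n1 - 1) * p + p = n1 * p := by
          calc (n1 - 1) * p + p = ((n1 - 1) + 1) * p := by ring
          _ = n1 * p := by rw [Nat.sub_add_cancel hn1]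
        have hneq : n = (n1 - 1) * p + (p - 1) := by omega
        cases k0 with
        | zero =>
          have hk1 : 0 < k1 := by
            rcases Nat.eq_zero_or_pos k1 with h | h
            · subst h; simp at hk
            · exact h
          have ek : (k1 - 1) * p + p = k1 * p := by
            calc (k1 - 1) * p + p = ((k1 - 1) + 1) * p := by ring
            _ = k1 * p := by rw [Nat.sub_add_cancel hk1]
          have hk' : k' = (k1 - 1) * p + (p - 1) := by omega
          rw [ih k' (n1 - 1) (p - 1) (k1 - 1) (p - 1) hneq hk' (by omega) (by omega),
            ih (k' + 1) (n1 - 1) (p - 1) k1 0 hneq (by omega) (by omega) hp,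
            qChoose_self, qChoose_zero_right,
            show k' + 1 = k1 * p + 0 by omega, hq, pow_zero, qChoose_zero_right]
          have hch := Nat.choose_succ_succ' (n1 - 1) (k1 - 1)
          rw [show n1 - 1 + 1 = n1 by omega, show k1 - 1 + 1 = k1 by omega] at hch
          rw [hch]
          push_cast
          ring
        | succ s =>
          rw [ih k' (n1 - 1) (p - 1) k1 s hneq (by omega) (by omega) (by omega),
            ih (k' + 1) (n1 - 1) (p - 1) k1 (s + 1) hneq (by omega) (by omega) (by omega),
            show k' + 1 = k1 * p + (s + 1) by omega, hq, qChoose_zero_succ, mul_zero]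
          have hz : qChoose q p (s + 1) = 0 :=
            qChoose_p_eq_zero q p hp hp0 hmin hflat (by omega) (by omega)
          have hpas := qChoose_succ_succ q (p - 1) s
          rw [show p - 1 + 1 = p by omega] at hpas
          linear_combination (-((n1 - 1).choose k1 : R)) * hpas +
            (((n1 - 1).choose k1 : R)) * hz
      · -- n0 > 0
        have hneq : n = n1 * p + (n0 - 1) := by omega
        cases k0 with
        | zero =>
          have hk1 : 0 < k1 := by
            rcases Nat.eq_zero_or_pos k1 with h | h
            · subst h; simp at hk
            · exact h
          have ek : (k1 - 1) * p + p = k1 * p := by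
            calc (k1 - 1) * p + p = ((k1 - 1) + 1) * p := by ring
            _ = k1 * p := by rw [Nat.sub_add_cancel hk1]
          have hk' : k' = (k1 - 1) * p + (p - 1) := by omega
          rw [ih k' n1 (n0 - 1) (k1 - 1) (p - 1) hneq hk' (by omega) (by omega),
            ih (k' + 1) n1 (n0 - 1) k1 0 hneq (by omega) (by omega) hp,
            qChoose_zero_right, qChoose_eq_zero q (n := n0 - 1) (k := p - 1) (by omega),
            show k' + 1 = k1 * p + 0 by omega, hq, pow_zero, qChoose_zero_right]
          ring
        | succ s =>
          rw [ih k' n1 (n0 - 1) k1 s hneq (by omega) (by omega) (by omega),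
            ih (k' + 1) n1 (n0 - 1) k1 (s + 1) hneq (by omega) (by omega) (by omega),
            show k' + 1 = k1 * p + (s + 1) by omega, hq]
          have hpas := qChoose_succ_succ q (n0 - 1) s
          rw [show n0 - 1 + 1 = n0 by omega] at hpas
          linear_combination (-(n1.choose k1 : R)) * hpas


include hp hp0 hmin hflat in
lemma sign_lemma (l : ℕ) :
    (-1 : R) ^ (l * p) * q ^ (l * p * (l * p - 1) / 2) = (-1 : R) ^ l := by
  rcases Nat.even_or_odd p with hpe | hpo
  · -- p even
    obtain ⟨s, hs⟩ := hpe
    have hs1 : 0 < s := by omega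
    have hqs : q ^ s = -1 := by
      have h2 : qInt q p = qInt q s * (1 + q ^ s) := by
        rw [show p = s + s from hs, qInt_add]; ring
      have hreg : IsRegular (qInt q s) := qInt_regular q p hp hp0 hmin hflat (fun hd => by
        have := Nat.le_of_dvd hs1 hd; omega)
      have h4 : qInt q s * (1 + q ^ s) = qInt q s * 0 := by rw [mul_zero, ← h2, hp0]
      have h3 : 1 + q ^ s = 0 := hreg.left h4
      linear_combination h3
    have he : l * p * (l * p - 1) / 2 = s * (l * (l * p - 1)) := by
      have h4 : l * p * (l * p - 1) = 2 * (s * (l * (l * p - 1))) := by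
        have h5 : l * p = 2 * (s * l) := by rw [hs]; ring
        calc l * p * (l * p - 1) = 2 * (s * l) * (l * p - 1) := by rw [← h5]
          _ = 2 * (s * (l * (l * p - 1))) := by ring
      omega
    rw [he, pow_mul q s, hqs]
    rcases Nat.even_or_odd l with hl | hl
    · rw [(hl.mul_right p).neg_one_pow, (hl.mul_right _).neg_one_pow, hl.neg_one_pow, one_mul]
    · have hlp : Even (l * p) := (Even.mul_left (⟨s, hs⟩ : Even p) l)
      have hlp1 : Odd (l * p - 1) :=
        Nat.Even.sub_odd (Nat.one_le_iff_ne_zero.mpr (Nat.mul_ne_zero (by rcases hl with ⟨m, hm⟩; omega) (by omega))) hlp odd_one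
      rw [hlp.neg_one_pow, (hl.mul hlp1).neg_one_pow, hl.neg_one_pow, one_mul]
  · -- p odd
    have h2 : 2 ∣ l * (l * p - 1) := by
      rcases Nat.even_or_odd l with hl | hl
      · exact (hl.mul_right _).two_dvd
      · have hlp : Odd (l * p) := hl.mul hpo
        exact ((Nat.Odd.sub_odd hlp odd_one).mul_left l).two_dvd
    obtain ⟨t, ht⟩ := h2
    have he : l * p * (l * p - 1) / 2 = p * t := by
      have h4 : l * p * (l * p - 1) = 2 * (p * t) := by
        calc l * p * (l * p - 1) = p * (l * (l * p - 1)) := by ring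
          _ = p * (2 * t) := by rw [ht]
          _ = 2 * (p * t) := by ring
      omega
    rw [he, pow_mul q p, q_pow_p q p hp0, one_pow, mul_one]
    rcases Nat.even_or_odd l with hl | hl
    · rw [(hl.mul_right p).neg_one_pow, hl.neg_one_pow]
    · rw [(hl.mul hpo).neg_one_pow, hl.neg_one_pow]

include hp hp0 hmin hflat in
lemma qChoose_mul_p_mul_p (a b : ℕ) : qChoose q (a * p) (b * p) = (a.choose b : R) := by
  have h := lucas q p hp hp0 hmin hflat (a * p) (b * p) a 0 b 0 (by omega) (by omega) hp hp
  simpa [qChoose_zero_right] using h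

include hp hp0 hmin hflat in
lemma qChoose_mul_p_not_dvd (a i : ℕ) (h : ¬ p ∣ i) : qChoose q (a * p) i = 0 := by
  have h0 : i % p ≠ 0 := fun h0 => h (Nat.dvd_of_mod_eq_zero h0)
  have hi : i = (i / p) * p + i % p := by
    rw [mul_comm]; exact (Nat.div_add_mod i p).symm
  have hlu := lucas q p hp hp0 hmin hflat (a * p) i a 0 (i / p) (i % p)
    (by omega) hi hp (Nat.mod_lt i hp)
  rw [hlu]
  obtain ⟨m, hm⟩ : ∃ m, i % p = m + 1 := ⟨i % p - 1, by omega⟩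
  rw [hm, qChoose_zero_succ, mul_zero]

include hp hp0 hmin hflat in
lemma dp_key (j k l : ℕ) :
    (-1 : R) ^ (l * p) * q ^ (l * p * (l * p - 1) / 2) *
      qChoose q (j * p + k * p - l * p) (j * p) * qChoose q (j * p) (l * p)
      = (-1 : R) ^ l * ((j + k - l).choose j : R) * (j.choose l : R) := by
  rw [show j * p + k * p - l * p = (j + k - l) * p by rw [Nat.sub_mul, Nat.add_mul],
    qChoose_mul_p_mul_p q p hp hp0 hmin hflat, qChoose_mul_p_mul_p q p hp hp0 hmin hflat,
    sign_lemma q p hp hp0 hmin hflat]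


end Char

lemma map_qInt (f : R →+* S) (m : ℕ) : f (qInt q m) = qInt (f q) m := by
  simp [qInt, map_sum, map_pow]

lemma map_qChoose (f : R →+* S) : ∀ n k : ℕ, f (qChoose q n k) = qChoose (f q) n k := by
  intro n
  induction n with
  | zero =>
    intro k
    cases k with
    | zero => simp [qChoose_zero_right]
    | succ k => simp [qChoose_zero_succ]
  | succ n ih =>
    intro k
    cases k with
    | zero => simp [qChoose_zero_right]
    | succ k => rw [qChoose_succ_succ, map_add, map_mul, map_pow, ih, ih, qChoose_succ_succ]

lemma qInt_one_left (m : ℕ) : qInt (1 : R) m = (m : R) := by simp [qInt]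

lemma qChoose_one_left : ∀ n k : ℕ, qChoose (1 : R) n k = (n.choose k : R) := by
  intro n
  induction n with
  | zero =>
    intro k
    cases k with
    | zero => simp [qChoose_zero_right]
    | succ k => simp [qChoose_zero_succ]
  | succ n ih =>
    intro k
    cases k with
    | zero => simp [qChoose_zero_right]
    | succ k =>
      rw [qChoose_succ_succ, ih, ih, one_pow, one_mul, Nat.choose_succ_succ]
      push_cast
      ring


lemma sum_collapse {M : Type*} [AddCommMonoid M] (p N : ℕ) (hp : 0 < p) (F : ℕ → M)
    (h : ∀ i, ¬ p ∣ i → F i = 0) :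
    ∑ i ∈ Finset.range (N * p + 1), F i = ∑ l ∈ Finset.range (N + 1), F (l * p) := by
  classical
  rw [← Finset.sum_filter_of_ne (s := Finset.range (N * p + 1)) (p := fun i => p ∣ i)
    (fun i _ hFi => by by_contra hd; exact hFi (h i hd))]
  refine Finset.sum_nbij' (fun i => i / p) (fun l => l * p) ?_ ?_ ?_ ?_ ?_
  · intro a ha
    simp only [Finset.mem_filter, Finset.mem_range] at ha
    obtain ⟨ha1, m, hm⟩ := ha
    subst hm
    simp only [Finset.mem_range]
    rw [Nat.mul_div_cancel_left m hp]
    by_contra hcon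
    push_neg at hcon
    have : (N + 1) * p ≤ p * m := Nat.mul_le_mul_right p hcon |>.trans_eq (mul_comm _ _)
    nlinarith [ha1]
  · intro l hl
    simp only [Finset.mem_range] at hl ⊢
    simp only [Finset.mem_filter, Finset.mem_range]
    constructor
    · have : l * p ≤ N * p := Nat.mul_le_mul_right p (by omega)
      omega
    · exact Dvd.intro l (mul_comm p l ▸ rfl)
  · intro a ha
    simp only [Finset.mem_filter] at ha
    obtain ⟨-, m, hm⟩ := ha
    subst hm
    show p * m / p * p = p * m
    rw [Nat.mul_div_cancel_left m hp, mul_comm]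
  · intro l _
    show l * p / p = l
    rw [Nat.mul_div_cancel _ hp]
  · intro a ha
    simp only [Finset.mem_filter] at ha
    obtain ⟨-, m, hm⟩ := ha
    subst hm
    show F (p * m) = F (p * m / p * p)
    rw [Nat.mul_div_cancel_left m hp, mul_comm]

section Alg

variable {A : Type*} [CommRing A] [Algebra R A]
variable (p : ℕ) (hp : 0 < p) (hp0 : qInt q p = 0)
  (hmin : ∀ m : ℕ, 0 < m → m < p → qInt q m ≠ 0)
  (hflat : ∀ m : ℕ, qInt q m = 0 ∨ IsRegular (qInt q m))

include hp hp0 hmin hflat in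
lemma dpCoeff_mul_p (y : A) (j k l : ℕ) :
    dpCoeff (algebraMap R A q) y (j * p) (k * p) (l * p) = dpCoeff (1 : A) (y ^ p) j k l := by
  have key := dp_key q p hp hp0 hmin hflat j k l
  have h2 := congrArg (algebraMap R A) key
  simp only [map_mul, map_pow, map_neg, map_one, map_qChoose, map_natCast] at h2
  unfold dpCoeff
  rw [qChoose_one_left, qChoose_one_left, one_pow,
    show (y ^ p) ^ l = y ^ (l * p) by rw [← pow_mul, mul_comm]]
  linear_combination y ^ (l * p) * h2

include hp hp0 hmin hflat in
lemma dpCoeff_not_dvd (y : A) (j k i : ℕ) (h : ¬ p ∣ i) :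
    dpCoeff (algebraMap R A q) y (j * p) (k * p) i = 0 := by
  unfold dpCoeff
  rw [← map_qChoose q (algebraMap R A) (j * p) i,
    qChoose_mul_p_not_dvd q p hp hp0 hmin hflat j i h, map_zero]
  ring

end Alg


end Aux

/-- Let `R` have `q`-characteristic `p > 0`, let `B = A⟨ξ⟩_{q,y}` (basis `b`) and
`C = A⟨ω⟩_{1,y^p}` (basis `c`) be twisted divided power polynomial rings. Then:
(1) if `R` is `q`-flat, the `A`-linear map `u` with `u(ω^{[k]}) = ξ^{[kp]}` is a ring
homomorphism (an `A`-algebra morphism); (2) if `R` is `q`-divisible, it induces an isomorphism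
of `A`-algebras `A⟨ω⟩_{1,y^p} ≅ A⟨ξ⟩_{q,y}/(ξ)`. -/
theorem statement5 {R A B C : Type*} [CommRing R] [CommRing A] [Algebra R A]
    [CommRing B] [Algebra A B] [CommRing C] [Algebra A C]
    (q : R) (y : A) (p : ℕ)
    (hp : 0 < p) (hp0 : qInt q p = 0) (hmin : ∀ m : ℕ, 0 < m → m < p → qInt q m ≠ 0)
    (b : Module.Basis ℕ A B)
    (hb : ∀ m n : ℕ, b m * b n = ∑ i ∈ Finset.range (min m n + 1),
      dpCoeff (algebraMap R A q) y m n i • b (m + n - i))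
    (c : Module.Basis ℕ A C)
    (hc : ∀ m n : ℕ, c m * c n = ∑ i ∈ Finset.range (min m n + 1),
      dpCoeff (1 : A) (y ^ p) m n i • c (m + n - i)) :
    ((∀ m : ℕ, qInt q m = 0 ∨ IsRegular (qInt q m)) →
      ∃ u : C →ₐ[A] B, ∀ k : ℕ, u (c k) = b (k * p)) ∧
    ((∀ m : ℕ, qInt q m = 0 ∨ IsUnit (qInt q m)) →
      ∃ e : C ≃ₐ[A] B ⧸ Ideal.span {b 1},
        ∀ k : ℕ, e (c k) = Ideal.Quotient.mk (Ideal.span {b 1}) (b (k * p))) := by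
  classical
  -- `b 0` and `c 0` are the identities
  have hb0 : b 0 = (1 : B) := by
    have h1 : LinearMap.mulLeft A (b 0) = LinearMap.id (R := A) (M := B) := by
      apply b.ext
      intro n
      simp only [LinearMap.mulLeft_apply, LinearMap.id_coe, id_eq]
      rw [hb 0 n]
      simp [dpCoeff, Aux.qChoose_zero_right]
    have h2 := LinearMap.congr_fun h1 (1 : B)
    simpa using h2
  have hc0 : c 0 = (1 : C) := by
    have h1 : LinearMap.mulLeft A (c 0) = LinearMap.id (R := A) (M := C) := by
      apply c.ext
      intro n
      simp only [LinearMap.mulLeft_apply, LinearMap.id_coe, id_eq]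
      rw [hc 0 n]
      simp [dpCoeff, Aux.qChoose_zero_right]
    have h2 := LinearMap.congr_fun h1 (1 : C)
    simpa using h2
  -- Part 1 (also used in part 2)
  have main : ∀ (_ : ∀ m : ℕ, qInt q m = 0 ∨ IsRegular (qInt q m)),
      ∃ u : C →ₐ[A] B, ∀ k : ℕ, u (c k) = b (k * p) := by
    intro hflat
    set u0 : C →ₗ[A] B := c.constr A (fun k => b (k * p)) with hu0
    have hu0b : ∀ k, u0 (c k) = b (k * p) := fun k => c.constr_basis A _ k
    have hmul : ∀ j k, u0 (c j * c k) = u0 (c j) * u0 (c k) := by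
      intro j k
      rw [hc j k, map_sum]
      simp only [map_smul, hu0b]
      rw [hb (j * p) (k * p)]
      have hminp : min (j * p) (k * p) = min j k * p := by
        rcases le_total j k with h | h
        · rw [min_eq_left h, min_eq_left (Nat.mul_le_mul_right p h)]
        · rw [min_eq_right h, min_eq_right (Nat.mul_le_mul_right p h)]
      rw [hminp, Aux.sum_collapse p (min j k) hp
        (fun i => dpCoeff (algebraMap R A q) y (j * p) (k * p) i • b (j * p + k * p - i))
        (fun i hi => by
          show dpCoeff (algebraMap R A q) y (j * p) (k * p) i • b (j * p + k * p - i) = 0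
          rw [Aux.dpCoeff_not_dvd q p hp hp0 hmin hflat y j k i hi, zero_smul])]
      apply Finset.sum_congr rfl
      intro l _
      rw [Aux.dpCoeff_mul_p q p hp hp0 hmin hflat y j k l,
        show j * p + k * p - l * p = (j + k - l) * p by rw [Nat.sub_mul, Nat.add_mul]]
    have hmul' : ∀ x z : C, u0 (x * z) = u0 x * u0 z := by
      rw [LinearMap.map_mul_iff]
      apply c.ext
      intro j
      apply c.ext
      intro k
      simp only [LinearMap.compr₂_apply, LinearMap.mul_apply', LinearMap.compl₂_apply,
        LinearMap.comp_apply]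
      exact hmul j k
    have hone : u0 1 = 1 := by
      rw [← hc0, hu0b, Nat.zero_mul, hb0]
    exact ⟨AlgHom.ofLinearMap u0 hone hmul', fun k => hu0b k⟩
  refine ⟨main, ?_⟩
  intro hdiv
  have hflat : ∀ m : ℕ, qInt q m = 0 ∨ IsRegular (qInt q m) :=
    fun m => (hdiv m).imp id fun h => h.isRegular
  obtain ⟨u, hu⟩ := main hflat
  set I : Ideal B := Ideal.span {b 1} with hI
  set N : Submodule A B := Submodule.span A (⇑b '' {n : ℕ | ¬ p ∣ n}) with hN
  have hunit : ∀ m, ¬ p ∣ m → IsUnit (algebraMap R A (qInt q m)) := by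
    intro m hm
    rcases hdiv m with h | h
    · exact absurd ((Aux.qInt_eq_zero_iff q p hp hp0 hmin m).mp h) hm
    · exact h.map (algebraMap R A)
  have hzero : ∀ m, p ∣ m → algebraMap R A (qInt q m) = 0 := by
    intro m hm
    rw [(Aux.qInt_eq_zero_iff q p hp hp0 hmin m).mpr hm, map_zero]
  -- multiplication by b 1
  have hb1 : ∀ n : ℕ, b 1 * b n = algebraMap R A (qInt q (n + 1)) • b (n + 1) -
      (algebraMap R A (qInt q n) * y) • b n := by
    intro n
    rw [hb 1 n]
    cases n with
    | zero =>
      simp [dpCoeff, Aux.qChoose_zero_right, Aux.qChoose_self, Aux.qChoose_one_right,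
        Aux.map_qInt, Aux.qInt_one, Aux.qInt_zero]
    | succ m =>
      rw [show min 1 (m + 1) = 1 by omega, Finset.sum_range_succ, Finset.sum_range_one]
      have e0 : dpCoeff (algebraMap R A q) y 1 (m + 1) 0 = algebraMap R A (qInt q (m + 2)) := by
        simp [dpCoeff, Aux.qChoose_zero_right, Aux.qChoose_one_right, ← Aux.map_qInt]
        rw [show 1 + (m + 1) = m + 2 from by omega]
      have e1 : dpCoeff (algebraMap R A q) y 1 (m + 1) 1 =
          -(algebraMap R A (qInt q (m + 1)) * y) := by
        simp [dpCoeff, Aux.qChoose_self, Aux.qChoose_one_right, ← Aux.map_qInt]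
      rw [e0, e1]
      rw [show 1 + (m + 1) - 0 = m + 1 + 1 by omega, show 1 + (m + 1) - 1 = m + 1 by omega]
      module
  -- I ⊆ N
  have hb1N : ∀ n, b 1 * b n ∈ N := by
    intro n
    rw [hb1 n]
    apply Submodule.sub_mem
    · by_cases hdv : p ∣ (n + 1)
      · rw [hzero _ hdv, zero_smul]; exact Submodule.zero_mem N
      · exact Submodule.smul_mem N _ (Submodule.subset_span ⟨n + 1, hdv, rfl⟩)
    · by_cases hdv : p ∣ n
      · rw [hzero _ hdv, zero_mul, zero_smul]; exact Submodule.zero_mem N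
      · exact Submodule.smul_mem N _ (Submodule.subset_span ⟨n, hdv, rfl⟩)
  have hIN : ∀ x ∈ I, x ∈ N := by
    intro x hx
    obtain ⟨t, rfl⟩ := Ideal.mem_span_singleton.mp hx
    have hexp : b 1 * t = (b.repr t).sum fun n a => a • (b 1 * b n) := by
      conv_lhs => rw [← b.linearCombination_repr t, Finsupp.linearCombination_apply,
        Finsupp.mul_sum]
      apply Finsupp.sum_congr
      intro n _
      rw [mul_smul_comm]
    rw [hexp]
    apply Submodule.finsuppSum_mem
    intro n _
    exact Submodule.smul_mem N _ (hb1N n)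
  -- basis vectors with index not divisible by p are in I
  have hNI : ∀ n, ¬ p ∣ n → b n ∈ I := by
    intro n
    induction n using Nat.strong_induction_on with
    | _ n ih =>
      intro hn
      cases n with
      | zero => exact absurd (dvd_zero p) hn
      | succ m =>
        have h1 : algebraMap R A (qInt q (m + 1)) • b (m + 1) =
            b 1 * b m + (algebraMap R A (qInt q m) * y) • b m := by
          rw [hb1 m, sub_add_cancel]
        have hmem : algebraMap R A (qInt q (m + 1)) • b (m + 1) ∈ I := by
          rw [h1]
          apply Ideal.add_mem
          · exact Ideal.mul_mem_right _ _ (Ideal.subset_span rfl)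
          · by_cases hdm : p ∣ m
            · rw [hzero m hdm, zero_mul, zero_smul]; exact I.zero_mem
            · have hbm : b m ∈ I := ih m (by omega) hdm
              rw [Algebra.smul_def]
              exact Ideal.mul_mem_left _ _ hbm
        have hu' : IsUnit (algebraMap R A (qInt q (m + 1))) := hunit (m + 1) hn
        have hx : b (m + 1) =
            ((hu'.unit⁻¹ : Aˣ) : A) • (algebraMap R A (qInt q (m + 1)) • b (m + 1)) := by
          conv_lhs => rw [← one_smul A (b (m + 1))]
          rw [← mul_smul]
          congr 1
          exact (hu'.val_inv_mul).symm
        rw [hx, Algebra.smul_def]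
        exact Ideal.mul_mem_left _ _ hmem
  -- the quotient map
  set π : B →ₐ[A] B ⧸ I := Ideal.Quotient.mkₐ A I with hπ
  set v : C →ₐ[A] B ⧸ I := π.comp u with hv
  have hvc : ∀ k, v (c k) = π (b (k * p)) := by
    intro k
    rw [hv, AlgHom.comp_apply, hu k]
  -- injectivity
  have hinj : Function.Injective v := by
    rw [injective_iff_map_eq_zero]
    intro x hx
    have hxI : u x ∈ I := by
      rw [← Ideal.Quotient.eq_zero_iff_mem]
      exact hx
    have hxN : u x ∈ N := hIN _ hxI
    have hux : u x = (c.repr x).sum fun k' a => a • b (k' * p) := by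
      conv_lhs => rw [← c.linearCombination_repr x, Finsupp.linearCombination_apply]
      rw [map_finsuppSum]
      apply Finsupp.sum_congr
      intro k' _
      rw [map_smul, hu]
    have hxM : u x ∈ Submodule.span A (⇑b '' {n : ℕ | p ∣ n}) := by
      rw [hux]
      apply Submodule.finsuppSum_mem
      intro k' _
      exact Submodule.smul_mem _ _ (Submodule.subset_span ⟨k' * p, ⟨k', mul_comm k' p⟩, rfl⟩)
    have hdisj : Disjoint N (Submodule.span A (⇑b '' {n : ℕ | p ∣ n})) := by
      apply b.linearIndependent.disjoint_span_image
      rw [Set.disjoint_left]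
      intro a ha ha'
      exact ha ha'
    have hux0 : u x = 0 := by
      have := hdisj.le_bot ⟨hxN, hxM⟩
      simpa using this
    -- conclude x = 0 by linear independence
    have hli : LinearIndependent A (fun k : ℕ => b (k * p)) := by
      have hinj' : Function.Injective (fun k : ℕ => k * p) := fun a a' h => by
        simpa using Nat.eq_of_mul_eq_mul_right hp h
      exact b.linearIndependent.comp _ hinj'
    have h0 : Finsupp.linearCombination A (fun k : ℕ => b (k * p)) (c.repr x) = 0 := by
      rw [Finsupp.linearCombination_apply, ← hux, hux0]
    have hrepr0 : c.repr x = 0 := linearIndependent_iff.mp hli _ h0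
    have := congrArg (c.repr.symm) hrepr0
    simpa using this
  -- surjectivity
  have hsurj : Function.Surjective v := by
    intro z
    obtain ⟨t, rfl⟩ := Ideal.Quotient.mk_surjective (I := I) z
    have hexp : (Ideal.Quotient.mk I) t = (b.repr t).sum fun n a => a • π (b n) := by
      show π t = _
      conv_lhs => rw [← b.linearCombination_repr t, Finsupp.linearCombination_apply]
      rw [map_finsuppSum]
      apply Finsupp.sum_congr
      intro n _
      rw [map_smul]
    have hz : (Ideal.Quotient.mk I) t ∈ LinearMap.range v.toLinearMap := by
      rw [hexp]
      apply Submodule.finsuppSum_mem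
      intro n _
      by_cases hdn : p ∣ n
      · obtain ⟨k, rfl⟩ := hdn
        apply Submodule.smul_mem
        exact ⟨c k, by rw [AlgHom.toLinearMap_apply, hvc k, mul_comm]⟩
      · have hπ0 : π (b n) = 0 := by
          rw [hπ, Ideal.Quotient.mkₐ_eq_mk, Ideal.Quotient.eq_zero_iff_mem]
          exact hNI n hdn
        rw [hπ0, smul_zero]
        exact Submodule.zero_mem _
    obtain ⟨x, hx⟩ := hz
    exact ⟨x, hx⟩
  refine ⟨AlgEquiv.ofBijective v ⟨hinj, hsurj⟩, ?_⟩
  intro k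
  show v (c k) = _
  rw [hvc k, hπ, Ideal.Quotient.mkₐ_eq_mk]
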